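/- If two partitioned tuples M and M' in a group G are equivalent via elementary moves on partitioned tuples, then their underlying tuples are Nielsen equivalent. -/

import Mathlib

/-- Elementary Nielsen moves on a tuple (encoded as a list) of elements of a group `G`. -/
inductive NielsenMove {G : Type*} [Group G] : List G → List G → Prop
  | inv (L : List G) (i : ℕ) (hi : i < L.length) :
      NielsenMove L (L.set i (L.get ⟨i, hi⟩)⁻¹)
  | swap (L : List G) (i j : ℕ) (hi : i < L.length) (hj : j < L.length) (hij : i ≠ j) :
      NielsenMove L ((L.set i (L.get ⟨j, hj⟩)).set j (L.get ⟨i, hi⟩))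
  | mul (L : List G) (i j : ℕ) (hi : i < L.length) (hj : j < L.length) (hij : i ≠ j) :
      NielsenMove L (L.set i (L.get ⟨i, hi⟩ * L.get ⟨j, hj⟩))

/-- Nielsen equivalence of tuples. -/
def NielsenEquiv {G : Type*} [Group G] : List G → List G → Prop :=
  Relation.ReflTransGen NielsenMove

/-- A partitioned tuple `(Y₁, …, Y_s; T)` is encoded as a pair `(Ys, T)` of a list of
tuples and a tuple. -/
abbrev PartitionedTuple (G : Type*) := List (List G) × List G

/-- The underlying tuple of a partitioned tuple: the concatenation `(Y₁, …, Y_s, T)`. -/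
def PartitionedTuple.underlying {G : Type*} (M : PartitionedTuple G) : List G :=
  M.1.flatten ++ M.2

/-- Elementary moves on partitioned tuples: conjugate some `Yᵢ` by an element of the
subgroup generated by the other `Yⱼ` and `T`, or replace an entry `t_k` of `T` by
`u * t_k * u'` with `u, u'` in the subgroup generated by all the `Yⱼ` and the other
entries of `T`. -/
inductive PartitionedMove {G : Type*} [Group G] :
    PartitionedTuple G → PartitionedTuple G → Prop
  | conj (Ys : List (List G)) (T : List G) (i : ℕ) (hi : i < Ys.length) (g : G)
      (hg : g ∈ Subgroup.closure
        ({x | ∃ j, j ≠ i ∧ ∃ hj : j < Ys.length, x ∈ Ys.get ⟨j, hj⟩} ∪ {x | x ∈ T})) :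
      PartitionedMove (Ys, T)
        (Ys.set i ((Ys.get ⟨i, hi⟩).map (fun y => g * y * g⁻¹)), T)
  | slide (Ys : List (List G)) (T : List G) (k : ℕ) (hk : k < T.length) (u u' : G)
      (hu : u ∈ Subgroup.closure
        ({x | ∃ Y ∈ Ys, x ∈ Y} ∪ {x | ∃ l, l ≠ k ∧ ∃ hl : l < T.length, x = T.get ⟨l, hl⟩}))
      (hu' : u' ∈ Subgroup.closure
        ({x | ∃ Y ∈ Ys, x ∈ Y} ∪ {x | ∃ l, l ≠ k ∧ ∃ hl : l < T.length, x = T.get ⟨l, hl⟩})) :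
      PartitionedMove (Ys, T) (Ys, T.set k (u * T.get ⟨k, hk⟩ * u'))

/-- Equivalence of partitioned tuples: a finite chain of elementary moves. -/
def PartitionedEquiv {G : Type*} [Group G] :
    PartitionedTuple G → PartitionedTuple G → Prop :=
  Relation.ReflTransGen PartitionedMove

section Aux
variable {G : Type*} [Group G]

private lemma list_set_get_self {α : Type*} (L : List α) (i : ℕ) (h : i < L.length) :
    L.set i L[i] = L := by
  apply List.ext_getElem (by simp)
  intro n h1 h2
  rw [List.getElem_set]
  split <;> simp_all

lemma NielsenMove.symm_equiv {L L' : List G} (h : NielsenMove L L') : NielsenEquiv L' L := by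
  cases h with
  | inv i hi =>
      refine Relation.ReflTransGen.single ?_
      have h2 : i < (L.set i (L.get ⟨i, hi⟩)⁻¹).length := by simpa using hi
      have := NielsenMove.inv (L.set i (L.get ⟨i, hi⟩)⁻¹) i h2
      simpa [list_set_get_self _ _ hi] using this
  | swap i j hi hj hij =>
      refine Relation.ReflTransGen.single ?_
      set L' := (L.set i (L.get ⟨j, hj⟩)).set j (L.get ⟨i, hi⟩) with hL'
      have hi' : i < L'.length := by simpa [L'] using hi
      have hj' : j < L'.length := by simpa [L'] using hj
      have := NielsenMove.swap L' i j hi' hj' hij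
      have e1 : L'.get ⟨j, hj'⟩ = L.get ⟨i, hi⟩ := by simp [L']
      have e2 : L'.get ⟨i, hi'⟩ = L.get ⟨j, hj⟩ := by
        simp [L', List.getElem_set_ne (Ne.symm hij)]
      rw [e1, e2] at this
      have e3 : (L'.set i (L.get ⟨i, hi⟩)).set j (L.get ⟨j, hj⟩) = L := by
        simp only [L']
        rw [List.set_comm _ _ hij, List.set_set, List.set_comm _ _ (Ne.symm hij),
          List.set_set]
        simp [list_set_get_self _ _ hi, list_set_get_self _ _ hj]
      rwa [e3] at this
  | mul i j hi hj hij =>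
      set a := L.get ⟨i, hi⟩; set b := L.get ⟨j, hj⟩
      set L1 := L.set i (a * b) with hL1
      have hi1 : i < L1.length := by simpa [L1] using hi
      have hj1 : j < L1.length := by simpa [L1] using hj
      -- step 1 : invert j
      have s1 := NielsenMove.inv L1 j hj1
      have e1 : L1.get ⟨j, hj1⟩ = b := by simp [L1, b, List.getElem_set_ne hij]
      rw [e1] at s1
      set L2 := L1.set j b⁻¹ with hL2
      have hi2 : i < L2.length := by simpa [L2, L1] using hi
      have hj2 : j < L2.length := by simpa [L2, L1] using hj
      -- step 2 : multiply i by j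
      have s2 := NielsenMove.mul L2 i j hi2 hj2 hij
      have e2i : L2.get ⟨i, hi2⟩ = a * b := by
        simp [L2, L1, List.getElem_set_ne (Ne.symm hij)]
      have e2j : L2.get ⟨j, hj2⟩ = b⁻¹ := by simp [L2]
      rw [e2i, e2j, mul_assoc, mul_inv_cancel, mul_one] at s2
      set L3 := L2.set i a with hL3
      have hj3 : j < L3.length := by simpa [L3, L2, L1] using hj
      -- step 3 : invert j back
      have s3 := NielsenMove.inv L3 j hj3
      have e3 : L3.get ⟨j, hj3⟩ = b⁻¹ := by simp [L3, L2, List.getElem_set_ne hij]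
      rw [e3, inv_inv] at s3
      have e4 : L3.set j b = L := by
        apply List.ext_getElem (by simp [L3, L2, L1])
        intro n h1 h2
        simp only [L3, L2, L1, List.getElem_set]
        split_ifs <;> simp_all [a, b]
      rw [e4] at s3
      exact (Relation.ReflTransGen.single s1).tail s2 |>.tail s3

lemma NielsenEquiv.symm {L L' : List G} (h : NielsenEquiv L L') : NielsenEquiv L' L := by
  induction h with
  | refl => exact Relation.ReflTransGen.refl
  | tail _ step ih => exact Relation.ReflTransGen.trans step.symm_equiv ih


def NielsenOthers (L : List G) (k : ℕ) : Set G :=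
  {x | ∃ j, j ≠ k ∧ ∃ hj : j < L.length, x = L[j]}

lemma nielsenOthers_set (L : List G) (k : ℕ) (b : G) :
    NielsenOthers (L.set k b) k = NielsenOthers L k := by
  ext x
  constructor
  · rintro ⟨j, hjk, hj, rfl⟩
    refine ⟨j, hjk, by simpa using hj, by rw [List.getElem_set_ne (Ne.symm hjk)]⟩
  · rintro ⟨j, hjk, hj, rfl⟩
    refine ⟨j, hjk, by simpa using hj, by rw [List.getElem_set_ne (Ne.symm hjk)]⟩

lemma nielsenEquiv_rmul (L : List G) (k : ℕ) (hk : k < L.length) (g : G)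
    (hg : g ∈ Subgroup.closure (NielsenOthers L k)) :
    NielsenEquiv L (L.set k (L[k] * g)) := by
  have key : ∀ a : G, NielsenEquiv (L.set k a) (L.set k (a * g)) := by
    induction hg using Subgroup.closure_induction with
    | mem x hx =>
        rintro a
        obtain ⟨j, hjk, hj, rfl⟩ := hx
        have hk' : k < (L.set k a).length := by simpa using hk
        have hj' : j < (L.set k a).length := by simpa using hj
        have := NielsenMove.mul (L.set k a) k j hk' hj' (Ne.symm hjk)
        have e1 : (L.set k a).get ⟨k, hk'⟩ = a := by simp
        have e2 : (L.set k a).get ⟨j, hj'⟩ = L[j] := by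
          simp [List.getElem_set_ne (Ne.symm hjk)]
        rw [e1, e2, List.set_set] at this
        exact Relation.ReflTransGen.single this
    | one => intro a; simp only [mul_one]; exact Relation.ReflTransGen.refl
    | mul x y hx hy ihx ihy =>
        intro a
        have := (ihx a).trans (ihy (a * x))
        rwa [mul_assoc] at this
    | inv x hx ihx =>
        intro a
        have := (ihx (a * x⁻¹)).symm
        rwa [inv_mul_cancel_right] at this
  have := key L[k]
  rwa [list_set_get_self _ _ hk] at this

lemma nielsenEquiv_lmul (L : List G) (k : ℕ) (hk : k < L.length) (g : G)
    (hg : g ∈ Subgroup.closure (NielsenOthers L k)) :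
    NielsenEquiv L (L.set k (g * L[k])) := by
  have hk1 : k < (L.set k (L[k])⁻¹).length := by simpa using hk
  have s1 : NielsenEquiv L (L.set k (L[k])⁻¹) := by
    have := NielsenMove.inv L k hk
    simpa [NielsenEquiv] using Relation.ReflTransGen.single this
  have s2 : NielsenEquiv (L.set k (L[k])⁻¹)
      ((L.set k (L[k])⁻¹).set k ((L.set k (L[k])⁻¹)[k] * g⁻¹)) := by
    apply nielsenEquiv_rmul _ _ hk1
    rw [nielsenOthers_set]
    exact inv_mem hg
  rw [List.getElem_set_self, List.set_set] at s2
  have s2' : NielsenEquiv L (L.set k ((L[k])⁻¹ * g⁻¹)) := s1.trans s2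
  have hk2 : k < (L.set k ((L[k])⁻¹ * g⁻¹)).length := by simpa using hk
  have s3 := NielsenMove.inv (L.set k ((L[k])⁻¹ * g⁻¹)) k hk2
  have e : (L.set k ((L[k])⁻¹ * g⁻¹)).get ⟨k, hk2⟩ = (L[k])⁻¹ * g⁻¹ := by simp
  rw [e] at s3
  rw [List.set_set, mul_inv_rev, inv_inv, inv_inv] at s3
  exact s2'.tail s3

lemma nielsenEquiv_conj_entry (L : List G) (k : ℕ) (hk : k < L.length) (g : G)
    (hg : g ∈ Subgroup.closure (NielsenOthers L k)) :
    NielsenEquiv L (L.set k (g * L[k] * g⁻¹)) := by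
  have s1 := nielsenEquiv_rmul L k hk g⁻¹ (inv_mem hg)
  have hk1 : k < (L.set k (L[k] * g⁻¹)).length := by simpa using hk
  have s2 : NielsenEquiv (L.set k (L[k] * g⁻¹))
      ((L.set k (L[k] * g⁻¹)).set k (g * (L.set k (L[k] * g⁻¹))[k])) := by
    apply nielsenEquiv_lmul _ _ hk1
    rw [nielsenOthers_set]
    exact hg
  rw [List.getElem_set_self, List.set_set, ← mul_assoc] at s2
  exact s1.trans s2


lemma mem_nielsenOthers_append (A C : List G) (y x : G)
    (hx : x ∈ A ∨ x ∈ C) : x ∈ NielsenOthers (A ++ y :: C) A.length := by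
  rcases hx with hx | hx
  · obtain ⟨j, hj, rfl⟩ := List.mem_iff_getElem.mp hx
    refine ⟨j, Nat.ne_of_lt hj, by simp; omega, ?_⟩
    rw [List.getElem_append_left hj]
  · obtain ⟨m, hm, rfl⟩ := List.mem_iff_getElem.mp hx
    refine ⟨A.length + (m + 1), by omega, by simp; omega, ?_⟩
    rw [List.getElem_append_right (Nat.le_add_right _ _)]
    simp

lemma nielsenEquiv_conj_block (Y : List G) : ∀ (A B : List G) (g : G),
    g ∈ Subgroup.closure {x | x ∈ A ∨ x ∈ B} →
    NielsenEquiv (A ++ (Y ++ B)) (A ++ (Y.map (fun y => g * y * g⁻¹) ++ B)) := by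
  induction Y with
  | nil => intro A B g _; exact Relation.ReflTransGen.refl
  | cons y Y ih =>
    intro A B g hg
    set c := g * y * g⁻¹ with hc
    have hL : A ++ ((y :: Y) ++ B) = A ++ y :: (Y ++ B) := by simp
    set L := A ++ y :: (Y ++ B) with hLdef
    have hk : A.length < L.length := by simp [L]
    have hg' : g ∈ Subgroup.closure (NielsenOthers L A.length) := by
      refine Subgroup.closure_mono ?_ hg
      intro x hx
      exact mem_nielsenOthers_append A (Y ++ B) y x
        (hx.imp_right fun h => List.mem_append_right _ h)
    have s1 := nielsenEquiv_conj_entry L A.length hk g hg'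
    have e1 : L[A.length] = y := by
      show (A ++ y :: (Y ++ B))[A.length]'(by simpa [hLdef] using hk) = y
      rw [List.getElem_append_right (le_refl _)]
      simp
    have e2 : L.set A.length c = A ++ c :: (Y ++ B) := by
      show (A ++ y :: (Y ++ B)).set A.length c = _
      rw [List.set_append_right _ _ (le_refl _)]
      simp
    simp only [e1, ← hc, e2] at s1
    have s2 : NielsenEquiv (A ++ c :: (Y ++ B)) (A ++ c :: (Y.map (fun y => g * y * g⁻¹) ++ B)) := by
      have h1 : A ++ c :: (Y ++ B) = (A ++ [c]) ++ (Y ++ B) := by simp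
      have h2 : A ++ c :: (Y.map (fun y => g * y * g⁻¹) ++ B)
          = (A ++ [c]) ++ (Y.map (fun y => g * y * g⁻¹) ++ B) := by simp
      rw [h1, h2]
      apply ih (A ++ [c]) B g
      refine Subgroup.closure_mono ?_ hg
      intro x hx
      exact hx.imp_left fun h => List.mem_append_left _ h
    have := (Relation.ReflTransGen.trans s1 s2)
    rw [hL]
    simpa [NielsenEquiv] using this

end Aux

section Main
variable {G : Type*} [Group G]

lemma partitionedMove_underlying {M M' : PartitionedTuple G} (h : PartitionedMove M M') :
    NielsenEquiv M.underlying M'.underlying := by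
  cases h with
  | slide Ys T k hk u u' hu hu' =>
      set F := Ys.flatten with hF
      set K := F.length + k with hK
      set L := F ++ T with hL
      have hKlt : K < L.length := by simp [L, K]; omega
      have eK : L[K] = T[k] := by
        show (F ++ T)[K]'(by simpa [hL] using hKlt) = T[k]
        rw [List.getElem_append_right (Nat.le_add_right _ _)]
        simp
      have inc : ({x | ∃ Y ∈ Ys, x ∈ Y} ∪
          {x | ∃ l, l ≠ k ∧ ∃ hl : l < T.length, x = T.get ⟨l, hl⟩}) ⊆
          NielsenOthers L K := by
        rintro x (⟨Y, hY, hxY⟩ | ⟨l, hlk, hl, rfl⟩)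
        · have hxF : x ∈ F := List.mem_flatten.mpr ⟨Y, hY, hxY⟩
          obtain ⟨j, hj, rfl⟩ := List.mem_iff_getElem.mp hxF
          refine ⟨j, by omega, by simp [L]; omega, ?_⟩
          rw [List.getElem_append_left hj]
        · refine ⟨F.length + l, by omega, by simp [L]; omega, ?_⟩
          rw [List.getElem_append_right (Nat.le_add_right _ _)]
          simp
      have hu2 : u ∈ Subgroup.closure (NielsenOthers L K) := Subgroup.closure_mono inc hu
      have hu'2 : u' ∈ Subgroup.closure (NielsenOthers L K) := Subgroup.closure_mono inc hu'
      have s1 := nielsenEquiv_rmul L K hKlt u' hu'2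
      have hK1 : K < (L.set K (L[K] * u')).length := by simpa using hKlt
      have s2 : NielsenEquiv (L.set K (L[K] * u'))
          ((L.set K (L[K] * u')).set K (u * (L.set K (L[K] * u'))[K])) := by
        apply nielsenEquiv_lmul _ _ hK1
        rw [nielsenOthers_set]
        exact hu2
      rw [List.getElem_set_self, List.set_set, ← mul_assoc] at s2
      have s3 := s1.trans s2
      have eset : L.set K (u * L[K] * u') = F ++ T.set k (u * T[k] * u') := by
        show (F ++ T).set K (u * L[K] * u') = _
        rw [List.set_append_right _ _ (hK ▸ Nat.le_add_right F.length k), eK]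
        congr 1
        simp [hK]
      rw [eset] at s3
      simpa [PartitionedTuple.underlying, NielsenEquiv] using s3
  | conj Ys T i hi g hg =>
      set A := (Ys.take i).flatten with hA
      set C := (Ys.drop (i + 1)).flatten with hC
      set B := C ++ T with hB
      set Yi := Ys[i] with hYi
      have hYs : Ys = Ys.take i ++ Ys[i] :: Ys.drop (i + 1) := by
        rw [List.getElem_cons_drop, List.take_append_drop]
      have eq0 : Ys.flatten ++ T = A ++ (Yi ++ B) := by
        calc Ys.flatten ++ T
            = (Ys.take i ++ Ys[i] :: Ys.drop (i + 1)).flatten ++ T := by rw [← hYs]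
          _ = A ++ (Yi ++ B) := by
              simp only [List.flatten_append, List.flatten_cons, List.append_assoc]
              rfl
      have eq1 : (Ys.set i (Yi.map (fun y => g * y * g⁻¹))).flatten ++ T
          = A ++ (Yi.map (fun y => g * y * g⁻¹) ++ B) := by
        rw [List.set_eq_take_append_cons_drop, if_pos hi]
        simp only [List.flatten_append, List.flatten_cons, List.append_assoc]
        rfl
      have inc : ({x | ∃ j, j ≠ i ∧ ∃ hj : j < Ys.length, x ∈ Ys.get ⟨j, hj⟩} ∪ {x | x ∈ T})
          ⊆ {x | x ∈ A ∨ x ∈ B} := by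
        rintro x (⟨j, hji, hj, hx⟩ | hx)
        · rcases lt_or_gt_of_ne hji with hlt | hgt
          · left
            refine List.mem_flatten.mpr ⟨Ys[j], ?_, by simpa using hx⟩
            rw [List.mem_iff_getElem]
            exact ⟨j, by simp; omega, by simp⟩
          · right
            refine List.mem_append_left _ (List.mem_flatten.mpr ⟨Ys[j], ?_, by simpa using hx⟩)
            rw [List.mem_iff_getElem]
            refine ⟨j - (i + 1), by simp; omega, ?_⟩
            rw [List.getElem_drop]
            congr 1
            omega
        · exact Or.inr (List.mem_append_right _ hx)
      have hg2 : g ∈ Subgroup.closure {x | x ∈ A ∨ x ∈ B} := Subgroup.closure_mono inc hg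
      have key := nielsenEquiv_conj_block Yi A B g hg2
      show NielsenEquiv (Ys.flatten ++ T)
        ((Ys.set i (Yi.map fun y => g * y * g⁻¹)).flatten ++ T)
      rw [eq0, eq1]
      exact key

end Main

/-- If two partitioned tuples are equivalent via elementary moves, then their underlying
tuples are Nielsen equivalent. -/
theorem partitionedEquiv_underlying_nielsenEquiv {G : Type*} [Group G]
    (M M' : PartitionedTuple G)
    (hne : M.1 ≠ [] ∨ M.2 ≠ [])
    (hY : ∀ Y ∈ M.1, Subgroup.closure {x | x ∈ Y} ≠ ⊥)
    (h : PartitionedEquiv M M') :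
    NielsenEquiv M.underlying M'.underlying := by
  induction h with
  | refl => exact Relation.ReflTransGen.refl
  | tail _ step ih => exact ih.trans (partitionedMove_underlying step)
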